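/- Invariant lemma for the 2-Hamming reduction: any string over the augmented alphabet reachable from an encoding E(v) by the cost-1 2-substitutions of the reduction and containing no marker symbol S⁻ or S⁺ is itself the encoding E(v') of some string v' over Σ, and moreover v' is reachable from v by allowed 3-substitutions using a number of 3-substitutions equal to one third of the number of 2-substitutions applied. -/

import Mathlib

/-- The augmented alphabet of the reduction from DECIS'-3-Hamming to
DECIS-2-Hamming: window pairs over `Σ ∪ {$}` (with `$` modelled by `none`),
plus the marker symbols `S⁻_{(ab)(de)}` and `S⁺_{(bc)(ef)}`. -/
inductive WSym (α : Type*) where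
  | pair : Option α → Option α → WSym α
  | left : α × α → α × α → WSym α
  | right : α × α → α × α → WSym α

/-- The `$`-padded version of a string. -/
def padS {α : Type*} (v : List α) : List (Option α) :=
  none :: (v.map some ++ [none])

/-- The sliding-window encoding of `v`: the length-`(n+1)` string of overlapping
pairs of consecutive symbols of `$v$`. -/
def encS {α : Type*} (v : List α) : List (WSym α) :=
  ((padS v).zip (padS v).tail).map fun q => WSym.pair q.1 q.2

/-- A `2`-substitution rewriting the factor `[x, y]` into `[x', y']`. -/
def Sub2 {β : Type*} (x y x' y' : β) (v w : List β) : Prop :=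
  ∃ p s : List β, v = p ++ [x, y] ++ s ∧ w = p ++ [x', y'] ++ s

/-- One application of an allowed `3`-substitution from `D`. -/
def Step3 {α : Type*} (D : Set ((α × α × α) × (α × α × α))) (v w : List α) : Prop :=
  ∃ r ∈ D, ∃ p s : List α,
    v = p ++ [r.1.1, r.1.2.1, r.1.2.2] ++ s ∧ w = p ++ [r.2.1, r.2.2.1, r.2.2.2] ++ s

/-- One application of a cost-1 `2`-substitution of the reduction: for each allowed
`3`-substitution `abc → def` in `D` we have `(ab)(bc) → S⁻_{(ab)(de)} S⁺_{(bc)(ef)}`,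
`(xa) S⁻_{(ab)(de)} → (xd)(de)` for all `x ∈ Σ ∪ {$}`, and
`S⁺_{(bc)(ef)} (cy) → (ef)(fy)` for all `y ∈ Σ ∪ {$}`.  All other
`2`-substitutions are forbidden. -/
def Step2 {α : Type*} (D : Set ((α × α × α) × (α × α × α))) (v w : List (WSym α)) : Prop :=
  ∃ a b c d e f : α, ((a, b, c), (d, e, f)) ∈ D ∧
    (Sub2 (WSym.pair (some a) (some b)) (WSym.pair (some b) (some c))
        (WSym.left (a, b) (d, e)) (WSym.right (b, c) (e, f)) v w ∨
     (∃ x : Option α, Sub2 (WSym.pair x (some a)) (WSym.left (a, b) (d, e))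
        (WSym.pair x (some d)) (WSym.pair (some d) (some e)) v w) ∨
     (∃ y : Option α, Sub2 (WSym.right (b, c) (e, f)) (WSym.pair (some c) y)
        (WSym.pair (some e) (some f)) (WSym.pair (some f) y) v w))

/-- A sequence of `m` steps of the relation `r` from `v` to `w`. -/
inductive StepChain {β : Type*} (r : β → β → Prop) : β → β → ℕ → Prop
  | refl (v : β) : StepChain r v v 0
  | tail {v u w : β} {m : ℕ} : StepChain r v u m → r u w → StepChain r v w (m + 1)

namespace HamRed

variable {α : Type*}

/-- Scanner states for the configuration grammar. -/
inductive St (α : Type*) where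
  | nm : Option α → St α
  | mmF : α → α → St α
  | mmB : α → α → St α
  | postL : α → α → α → α → St α
  | sb2 : α → α → α → α → St α
deriving DecidableEq

/-- One window step of the configuration grammar.  `TStep D st w o r s st'`
means in state `st` the scanner consumes window `w`, emits the committed
letter `o` for the current padded position, adds `r` to the remaining cost of
committed pending ops, `s` to the spent cost of uncommitted pending ops. -/
inductive TStep (D : Set ((α × α × α) × (α × α × α))) :
    St α → WSym α → Option α → ℕ → ℕ → St α → Prop where
  | pure (x y) : TStep D (.nm x) (.pair x y) x 0 0 (.nm y)
  | toB (x d a) : TStep D (.nm x) (.pair x (some d)) x 0 0 (.mmB d a)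
  | fromF (c f y) : TStep D (.mmF c f) (.pair (some c) y) (some f) 0 0 (.nm y)
  | fromF_toB (c f d a) :
      TStep D (.mmF c f) (.pair (some c) (some d)) (some f) 0 0 (.mmB d a)
  | lS0 (a b d e) :
      TStep D (.nm (some a)) (.left (a,b) (d,e)) (some a) 0 0 (.postL a b d e)
  | rS0 (a b c d e f) (h : ((a,b,c),(d,e,f)) ∈ D) :
      TStep D (.postL a b d e) (.right (b,c) (e,f)) (some b) 0 1 (.nm (some c))
  | scDisp (a b c d e f) (h : ((a,b,c),(d,e,f)) ∈ D) :
      TStep D (.postL a b d e) (.pair (some e) (some f)) (some b) 0 2 (.mmF f c)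
  | lCSC (a b d e) :
      TStep D (.mmB a d) (.left (a,b) (d,e)) (some d) 1 0 (.nm (some e))
  | lCSC' (a b d e c') :
      TStep D (.mmB a d) (.left (a,b) (d,e)) (some d) 1 0 (.mmB e c')
  | sbPair (a b d e) :
      TStep D (.mmB d a) (.pair (some d) (some e)) (some a) 0 0 (.sb2 a b d e)
  | rUSB (a b c d e f) (h : ((a,b,c),(d,e,f)) ∈ D) :
      TStep D (.sb2 a b d e) (.right (b,c) (e,f)) (some b) 0 2 (.nm (some c))
  | rCSB (b c e f) :
      TStep D (.nm (some e)) (.right (b,c) (e,f)) (some e) 1 0 (.mmF c f)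
  | rCSB' (b c e f g) :
      TStep D (.mmF e g) (.right (b,c) (e,f)) (some g) 1 0 (.mmF c f)

/-- Iterated window steps. -/
inductive Frag (D : Set ((α × α × α) × (α × α × α))) :
    St α → List (WSym α) → List (Option α) → ℕ → ℕ → St α → Prop where
  | nil (st) : Frag D st [] [] 0 0 st
  | cons {st w o r1 s1 st' ws out r s fin} :
      TStep D st w o r1 s1 st' → Frag D st' ws out r s fin →
      Frag D st (w :: ws) (o :: out) (r1 + r) (s1 + s) fin

variable {D : Set ((α × α × α) × (α × α × α))}

theorem frag_append {st1 ws1 out1 r1 s1 st2 ws2 out2 r2 s2 st3}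
    (h1 : Frag D st1 ws1 out1 r1 s1 st2) (h2 : Frag D st2 ws2 out2 r2 s2 st3) :
    Frag D st1 (ws1 ++ ws2) (out1 ++ out2) (r1 + r2) (s1 + s2) st3 := by
  induction h1 with
  | nil => simpa using h2
  | cons hT _ ih =>
      simpa [add_assoc] using Frag.cons hT (ih h2)

theorem frag_split {st1 ws1 ws2 out r s st3}
    (h : Frag D st1 (ws1 ++ ws2) out r s st3) :
    ∃ st2 out1 out2 r1 s1 r2 s2, Frag D st1 ws1 out1 r1 s1 st2 ∧
      Frag D st2 ws2 out2 r2 s2 st3 ∧ out = out1 ++ out2 ∧ r = r1 + r2 ∧ s = s1 + s2 := by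
  induction ws1 generalizing st1 out r s with
  | nil => exact ⟨st1, [], out, 0, 0, r, s, .nil st1, h, rfl, by omega, by omega⟩
  | cons w t ih =>
      cases h with
      | cons hT hF =>
          obtain ⟨st2, out1, out2, r1, s1, r2, s2, hA, hB, ho, hr, hs⟩ := ih hF
          exact ⟨st2, _ :: out1, out2, _, _, r2, s2, .cons hT hA, hB, by simp [ho],
            by omega, by omega⟩

/-- Window list of a padded letter list. -/
def wnd : Option α → List (Option α) → List (WSym α)
  | _, [] => []
  | x, y :: l => .pair x y :: wnd y l

theorem frag_wnd (t : List (Option α)) : ∀ x : Option α,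
    Frag D (.nm x) (wnd x (t ++ [none])) (x :: t) 0 0 (.nm none) := by
  induction t with
  | nil => intro x; exact (by simpa [wnd] using Frag.cons (TStep.pure x none) (.nil _))
  | cons y t ih =>
      intro x
      simpa [wnd] using Frag.cons (TStep.pure x y) (ih y)

theorem wnd_eq_zip (l : List (Option α)) : ∀ x,
    wnd x l = ((x :: l).zip l).map fun q => WSym.pair q.1 q.2 := by
  induction l with
  | nil => intro x; simp [wnd]
  | cons y l ih => intro x; simp [wnd, ih y]

theorem encS_eq_wnd (v : List α) : encS v = wnd none (v.map some ++ [none]) := by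
  rw [encS, padS, wnd_eq_zip]; rfl

/-- A `3`-substitution on committed-letter (padded) lists. -/
def OStep3 (D : Set ((α × α × α) × (α × α × α))) (o o' : List (Option α)) : Prop :=
  ∃ a b c d e f, ((a,b,c),(d,e,f)) ∈ D ∧ ∃ p s,
    o = p ++ [some a, some b, some c] ++ s ∧ o' = p ++ [some d, some e, some f] ++ s

theorem stepChain_append {β : Type*} {r : β → β → Prop} {a b c m k}
    (h1 : StepChain r a b m) (h2 : StepChain r b c k) : StepChain r a c (m + k) := by
  induction h2 with
  | refl => exact h1
  | tail _ hs ih => exact .tail ih hs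

theorem map_some_split {l : List α} {p q : List (Option α)} {a b c : α}
    (h : l.map some = p ++ [some a, some b, some c] ++ q) :
    ∃ P Q, l = P ++ [a, b, c] ++ Q ∧ p = P.map some ∧ q = Q.map some := by
  rw [List.map_eq_append_iff] at h
  obtain ⟨P, rest, hl, hp, hr⟩ := h
  rw [List.map_eq_append_iff] at hp
  obtain ⟨P1, mid, hP, hp1, hm⟩ := hp
  cases mid with
  | nil => simp at hm
  | cons x mid =>
    cases mid with
    | nil => simp at hm
    | cons y mid =>
      cases mid with
      | nil => simp at hm
      | cons z mid =>
        cases mid with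
        | nil =>
          simp only [List.map_cons, List.map_nil, List.cons.injEq, and_true] at hm
          obtain ⟨hx, hy, hz⟩ := hm
          exact ⟨P1, rest, by simp [hl, hP, Option.some.inj hx.symm, Option.some.inj hy.symm,
            Option.some.inj hz.symm], hp1.symm, hr.symm⟩
        | cons w mid => simp at hm

theorem ostep_lift {l : List α} {o' : List (Option α)} {D : Set ((α × α × α) × (α × α × α))}
    (h : OStep3 D (none :: l.map some) o') :
    ∃ l', o' = none :: l'.map some ∧ Step3 D l l' := by
  obtain ⟨a, b, c, d, e, f, hD, p, s, h1, h2⟩ := h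
  cases p with
  | nil => simp at h1
  | cons z p =>
      simp only [List.cons_append, List.cons.injEq] at h1
      obtain ⟨hz, h1⟩ := h1
      obtain ⟨P, Q, hl, hp, hq⟩ := map_some_split h1
      refine ⟨P ++ [d, e, f] ++ Q, ?_, ⟨((a,b,c),(d,e,f)), hD, P, Q, hl, rfl⟩⟩
      simp [h2, ← hz, hp, hq]

theorem ochain_lift {l : List α} {o' : List (Option α)} {k}
    {D : Set ((α × α × α) × (α × α × α))}
    (h : StepChain (OStep3 D) (none :: l.map some) o' k) :
    ∃ l', o' = none :: l'.map some ∧ StepChain (Step3 D) l l' k := by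
  induction h with
  | refl => exact ⟨l, rfl, .refl l⟩
  | tail _ hs ih =>
      obtain ⟨l1, rfl, hc⟩ := ih
      obtain ⟨l2, rfl, h3⟩ := ostep_lift hs
      exact ⟨l2, rfl, .tail hc h3⟩


/-- Adjacent `S⁺ S⁻` pair: a permanently stuck pattern. -/
def BadU (u : List (WSym α)) : Prop :=
  ∃ p q x1 x2 y1 y2, u = p ++ [WSym.right x1 x2, WSym.left y1 y2] ++ q

theorem two2 {β : Type*} {p1 q1 p2 q2 : List β} {a1 b1 a2 b2 : β}
    (h : p1 ++ [a1, b1] ++ q1 = p2 ++ [a2, b2] ++ q2) :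
    (p1 = p2 ∧ a1 = a2 ∧ b1 = b2 ∧ q1 = q2) ∨
    (∃ t, p2 = p1 ++ [a1] ∧ a2 = b1 ∧ q1 = b2 :: t ∧ q2 = t) ∨
    (∃ t, p1 = p2 ++ [a2] ∧ a1 = b2 ∧ q2 = b1 :: t ∧ q1 = t) ∨
    (∃ t, p2 = p1 ++ [a1, b1] ++ t ∧ q1 = t ++ [a2, b2] ++ q2) ∨
    (∃ t, p1 = p2 ++ [a2, b2] ++ t ∧ q2 = t ++ [a1, b1] ++ q1) := by
  rw [List.append_assoc, List.append_assoc, List.append_eq_append_iff] at h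
  rcases h with ⟨t, hp, hq⟩ | ⟨t, hp, hq⟩
  · match t, hq with
    | [], hq =>
        simp only [List.nil_append, List.cons.injEq] at hq
        obtain ⟨rfl, rfl, rfl⟩ := hq
        exact .inl ⟨by simp [hp], rfl, rfl, rfl⟩
    | [u], hq =>
        simp only [List.cons_append, List.nil_append, List.cons.injEq] at hq
        obtain ⟨rfl, rfl, rfl⟩ := hq
        exact .inr (.inl ⟨q2, by simp [hp], rfl, rfl, rfl⟩)
    | u :: w :: t', hq =>
        simp only [List.cons_append, List.nil_append, List.cons.injEq] at hq
        obtain ⟨rfl, rfl, hq⟩ := hq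
        exact .inr (.inr (.inr (.inl ⟨t', by simp [hp], by simpa using hq⟩)))
  · match t, hq with
    | [], hq =>
        simp only [List.nil_append, List.cons.injEq] at hq
        obtain ⟨rfl, rfl, rfl⟩ := hq
        exact .inl ⟨by simp [hp], rfl, rfl, rfl⟩
    | [u], hq =>
        simp only [List.cons_append, List.nil_append, List.cons.injEq] at hq
        obtain ⟨rfl, rfl, rfl⟩ := hq
        exact .inr (.inr (.inl ⟨q1, by simp [hp], rfl, rfl, rfl⟩))
    | u :: w :: t', hq =>
        simp only [List.cons_append, List.nil_append, List.cons.injEq] at hq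
        obtain ⟨rfl, rfl, hq⟩ := hq
        exact .inr (.inr (.inr (.inr ⟨t', by simp [hp], by simpa using hq⟩)))

theorem bad_sub2 {u u2 : List (WSym α)} {x y x' y' : WSym α}
    (hB : BadU u) (h : Sub2 x y x' y' u u2)
    (h1 : ∀ r1 r2, x ≠ WSym.left r1 r2)
    (h2 : ∀ r1 r2, y ≠ WSym.right r1 r2)
    (h3 : ∀ r1 r2 r3 r4, ¬(x = WSym.right r1 r2 ∧ y = WSym.left r3 r4)) : BadU u2 := by
  obtain ⟨p1, q1, x1, x2, y1, y2, hu⟩ := hB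
  obtain ⟨p2, q2, hv, hw⟩ := h
  rcases two2 (hu.symm.trans hv) with
    ⟨-, hx, hy, -⟩ | ⟨t, -, hx, -, -⟩ | ⟨t, -, hy, -, -⟩ |
    ⟨t, hp, -⟩ | ⟨t, hp, hq⟩
  · exact absurd ⟨hx.symm, hy.symm⟩ (h3 x1 x2 y1 y2)
  · exact absurd hx (h1 y1 y2)
  · exact absurd hy.symm (h2 x1 x2)
  · exact ⟨p1, t ++ [x', y'] ++ q2, x1, x2, y1, y2, by simp [hw, hp]⟩
  · exact ⟨p2 ++ [x', y'] ++ t, q1, x1, x2, y1, y2, by simp [hw, hq]⟩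

theorem bad_step {u u2 : List (WSym α)} (hB : BadU u) (h : Step2 D u u2) : BadU u2 := by
  obtain ⟨a, b, c, d, e, f, hD, hA | ⟨x, hS⟩ | ⟨y, hS⟩⟩ := h
  · exact bad_sub2 hB hA (fun _ _ h => by cases h) (fun _ _ h => by cases h)
      (fun _ _ _ _ h => by cases h.1)
  · exact bad_sub2 hB hS (fun _ _ h => by cases h) (fun _ _ h => by cases h)
      (fun _ _ _ _ h => by cases h.1)
  · exact bad_sub2 hB hS (fun _ _ h => by cases h) (fun _ _ h => by cases h)
      (fun _ _ _ _ h => by cases h.2)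

theorem frag_pairs {st ws out r s fin}
    (h : Frag D st ws out r s fin) :
    fin = .nm none → (∀ w ∈ ws, ∃ p q, w = WSym.pair p q) →
    (∀ x, st = .nm x → r = 0 ∧ s = 0 ∧
      ((ws = [] ∧ out = [] ∧ x = none) ∨
        ∃ t, out = x :: t ∧ ws = wnd x (t ++ [none]))) ∧
    (∀ d a, st ≠ St.mmB d a) ∧ (∀ a b d e, st ≠ St.sb2 a b d e) := by
  induction h with
  | nil st =>
      rintro rfl -
      refine ⟨?_, ?_, ?_⟩
      · rintro x hx; cases hx; exact ⟨rfl, rfl, .inl ⟨rfl, rfl, rfl⟩⟩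
      · rintro d a ⟨⟩
      · rintro a b d e ⟨⟩
  | @cons st w o r1 s1 st' ws out r s fin hT hF ih =>
      rintro rfl hp
      have ih' := ih rfl (fun w hw => hp w (List.mem_cons_of_mem _ hw))
      cases hT with
      | pure x y =>
          refine ⟨?_, ?_, ?_⟩
          · rintro x' hx'
            cases hx'
            obtain ⟨hr, hs, hbr⟩ := ih'.1 y rfl
            refine ⟨by omega, by omega, .inr ?_⟩
            rcases hbr with ⟨rfl, rfl, rfl⟩ | ⟨t, rfl, rfl⟩
            · exact ⟨[], rfl, by simp [wnd]⟩
            · exact ⟨y :: t, rfl, by simp [wnd]⟩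
          · rintro d a ⟨⟩
          · rintro a b d e ⟨⟩
      | toB x d a => exact absurd rfl (ih'.2.1 d a)
      | fromF c f y =>
          refine ⟨?_, ?_, ?_⟩
          · rintro x ⟨⟩
          · rintro d a ⟨⟩
          · rintro a b d e ⟨⟩
      | fromF_toB c f d a => exact absurd rfl (ih'.2.1 d a)
      | lS0 a b d e =>
          obtain ⟨p, q, hpq⟩ := hp _ (List.mem_cons_self); cases hpq
      | rS0 a b c d e f hD =>
          obtain ⟨p, q, hpq⟩ := hp _ (List.mem_cons_self); cases hpq
      | scDisp a b c d e f hD =>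
          refine ⟨?_, ?_, ?_⟩
          · rintro x ⟨⟩
          · rintro d' a' ⟨⟩
          · rintro a' b' d' e' ⟨⟩
      | lCSC a b d e =>
          obtain ⟨p, q, hpq⟩ := hp _ (List.mem_cons_self); cases hpq
      | lCSC' a b d e c' =>
          obtain ⟨p, q, hpq⟩ := hp _ (List.mem_cons_self); cases hpq
      | sbPair a b d e => exact absurd rfl (ih'.2.2 a b d e)
      | rUSB a b c d e f hD =>
          obtain ⟨p, q, hpq⟩ := hp _ (List.mem_cons_self); cases hpq
      | rCSB b c e f =>
          obtain ⟨p, q, hpq⟩ := hp _ (List.mem_cons_self); cases hpq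
      | rCSB' b c e f g =>
          obtain ⟨p, q, hpq⟩ := hp _ (List.mem_cons_self); cases hpq


/-! ### Surgery lemmas -/

theorem frag_eq {st ws out out' r r' s s' fin} (h : Frag D st ws out r s fin)
    (ho : out = out') (hr : r = r') (hs : s = s') : Frag D st ws out' r' s' fin := by
  subst ho; subst hr; subst hs; exact h

theorem S1F {c f ws out r s} (h : Frag D (.mmF c f) ws out r s (.nm none)) :
    ∃ t, out = some f :: t ∧ Frag D (.nm (some c)) ws (some c :: t) r s (.nm none) := by
  cases h with
  | cons hT hF =>
      cases hT with
      | fromF _ _ y => exact ⟨_, rfl, .cons (.pure (some c) y) hF⟩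
      | fromF_toB _ _ d a => exact ⟨_, rfl, .cons (.toB (some c) d a) hF⟩
      | rCSB' b c' _ f' _ => exact ⟨_, rfl, .cons (.rCSB b c' c f') hF⟩

theorem S1R {c ws out r s} (h : Frag D (.nm (some c)) ws out r s (.nm none)) (f : α) :
    (∃ ab de ws', ws = WSym.left ab de :: ws') ∨
    ∃ t, out = some c :: t ∧ Frag D (.mmF c f) ws (some f :: t) r s (.nm none) := by
  cases h with
  | cons hT hF =>
      cases hT with
      | pure _ y => exact .inr ⟨_, rfl, .cons (.fromF c f y) hF⟩
      | toB _ d a => exact .inr ⟨_, rfl, .cons (.fromF_toB c f d a) hF⟩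
      | lS0 _ b d e => exact .inl ⟨_, _, _, rfl⟩
      | rCSB b c' _ f' => exact .inr ⟨_, rfl, .cons (.rCSB' b c' c f' f) hF⟩

theorem PF {p out r s a₀} (h : Frag D (.nm none) p out r s (.nm (some a₀))) (d₀ : α) :
    (∃ p₀ x1 x2, p = p₀ ++ [WSym.right x1 x2]) ∨
    Frag D (.nm none) p out r s (.mmB a₀ d₀) := by
  rcases List.eq_nil_or_concat p with rfl | ⟨p', w, rfl⟩
  · cases h
  · simp only [List.concat_eq_append] at h ⊢
    obtain ⟨st2, out1, out2, r1, s1, r2, s2, hA, hB, rfl, rfl, rfl⟩ := frag_split h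
    cases hB with
    | cons hT hrest =>
        cases hrest
        cases hT with
        | pure =>
            rename_i x
            have hnew := frag_append hA (Frag.cons (TStep.toB (D := D) x a₀ d₀) (.nil _))
            exact .inr (frag_eq hnew rfl (by omega) (by omega))
        | fromF =>
            rename_i c' f'
            have hnew := frag_append hA (Frag.cons (TStep.fromF_toB (D := D) c' f' a₀ d₀) (.nil _))
            exact .inr (frag_eq hnew rfl (by omega) (by omega))
        | rS0 a b c d e f hD => exact .inl ⟨p', _, _, rfl⟩
        | rUSB a b c d e f hD => exact .inl ⟨p', _, _, rfl⟩
        | lCSC =>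
            rename_i a1 b1 d1
            have hnew := frag_append hA (Frag.cons (TStep.lCSC' (D := D) a1 b1 d1 a₀ d₀) (.nil _))
            exact .inr (frag_eq hnew rfl (by omega) (by omega))

theorem P3 {p out r s a b d e} (h : Frag D (.nm none) p out r s (.postL a b d e)) :
    BadU p ∨ ∃ t, out = t ++ [some a] ∧
      Frag D (.nm none) p (t ++ [some d]) (r + 1) s (.nm (some e)) := by
  rcases List.eq_nil_or_concat p with rfl | ⟨p', w, rfl⟩
  · cases h
  · simp only [List.concat_eq_append] at h ⊢
    obtain ⟨st2, out1, out2, r1, s1, r2, s2, hA, hB, rfl, rfl, rfl⟩ := frag_split h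
    cases hB with
    | cons hT hrest =>
        cases hrest
        cases hT with
        | lS0 =>
            rcases PF hA d with ⟨p₀, x1, x2, rfl⟩ | hA'
            · exact .inl ⟨p₀, [], x1, x2, (a, b), (d, e), by simp⟩
            · have hnew := frag_append hA' (Frag.cons (TStep.lCSC (D := D) a b d e) (.nil _))
              exact .inr ⟨out1, by simp, frag_eq hnew rfl (by omega) (by omega)⟩

theorem P2 {p out r s a f₀} (h : Frag D (.nm none) p out r s (.mmF a f₀)) :
    (BadU p ∨ ∃ p₀ x1 x2, p = p₀ ++ [WSym.right x1 x2]) ∨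
    ∃ a₁ b₁ d₁ e₁ t s₂, ((a₁,b₁,f₀),(d₁,e₁,a)) ∈ D ∧ s = s₂ + 2 ∧
      out = t ++ [some a₁, some b₁] ∧
      Frag D (.nm none) p (t ++ [some d₁, some e₁]) (r + 1) s₂ (.nm (some a)) := by
  rcases List.eq_nil_or_concat p with rfl | ⟨p', w, rfl⟩
  · cases h
  · simp only [List.concat_eq_append] at h ⊢
    obtain ⟨st2, out1, out2, r1, s1, r2, s2, hA, hB, rfl, rfl, rfl⟩ := frag_split h
    cases hB with
    | cons hT hrest =>
        cases hrest
        cases hT with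
        | rCSB b c e f => exact .inl (.inr ⟨p', _, _, rfl⟩)
        | rCSB' b c e f g => exact .inl (.inr ⟨p', _, _, rfl⟩)
        | scDisp =>
            rename_i a₁ b₁ d₁ e₁ hD
            rcases P3 hA with hbad | ⟨t, rfl, hA'⟩
            · obtain ⟨p₀, q₀, x1, x2, y1, y2, rfl⟩ := hbad
              exact .inl (.inl ⟨p₀, q₀ ++ [WSym.pair (some e₁) (some a)], x1, x2, y1, y2, by simp⟩)
            · have hnew := frag_append hA'
                (Frag.cons (TStep.pure (D := D) (some e₁) (some a)) (.nil _))
              exact .inr ⟨a₁, b₁, d₁, e₁, t, s1, hD, by omega, by simp,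
                frag_eq hnew (by simp) (by omega) (by omega)⟩

theorem P1 {p out r s a b d e} (h : Frag D (.nm none) p out r s (.sb2 a b d e)) :
    ∃ t g, out = t ++ [g, some a] ∧
      Frag D (.nm none) p (t ++ [g, some d]) r s (.nm (some e)) := by
  rcases List.eq_nil_or_concat p with rfl | ⟨p', w, rfl⟩
  · cases h
  · simp only [List.concat_eq_append] at h ⊢
    obtain ⟨st2, out1, out2, r1, s1, r2, s2, hA, hB, rfl, rfl, rfl⟩ := frag_split h
    cases hB with
    | cons hT hrest =>
        cases hrest
        cases hT with
        | sbPair =>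
            have key : ∃ t g, out1 = t ++ [g] ∧
                Frag D (.nm none) p' (t ++ [g]) r1 s1 (.nm (some d)) := by
              rcases List.eq_nil_or_concat p' with rfl | ⟨p'', w', rfl⟩
              · cases hA
              · simp only [List.concat_eq_append] at hA ⊢
                obtain ⟨st3, o1, o2, r3, s3, r4, s4, hC, hDd, rfl, rfl, rfl⟩ := frag_split hA
                cases hDd with
                | cons hT2 hrest2 =>
                    cases hrest2
                    cases hT2 with
                    | toB =>
                        rename_i x
                        have hnew := frag_append hC
                          (Frag.cons (TStep.pure (D := D) x (some d)) (.nil _))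
                        exact ⟨o1, x, rfl, frag_eq hnew rfl (by omega) (by omega)⟩
                    | fromF_toB =>
                        rename_i c' f'
                        have hnew := frag_append hC
                          (Frag.cons (TStep.fromF (D := D) c' f' (some d)) (.nil _))
                        exact ⟨o1, some f', rfl, frag_eq hnew rfl (by omega) (by omega)⟩
                    | lCSC' =>
                        rename_i a1 b1 d1
                        have hnew := frag_append hC
                          (Frag.cons (TStep.lCSC (D := D) a1 b1 d1 d) (.nil _))
                        exact ⟨o1, some d1, rfl, frag_eq hnew rfl (by omega) (by omega)⟩
            obtain ⟨t, g, rfl, hnew⟩ := key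
            have hnew2 := frag_append hnew
              (Frag.cons (TStep.pure (D := D) (some d) (some e)) (.nil _))
            exact ⟨t, g, by simp, frag_eq hnew2 (by simp) (by omega) (by omega)⟩

theorem S2 {c ch ws out r s} (h : Frag D (.mmB c ch) ws out r s (.nm none)) :
    (∃ ab de ws', ws = WSym.left ab de :: ws') ∨ BadU ws ∨
    ∃ b₂ c₂ e₂ f₂ t s₂, ((ch,b₂,c₂),(c,e₂,f₂)) ∈ D ∧ s = s₂ + 2 ∧
      out = some ch :: some b₂ :: some c₂ :: t ∧
      Frag D (.nm (some c)) ws (some c :: some e₂ :: some f₂ :: t) (r + 1) s₂ (.nm none) := by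
  cases h with
  | cons hT hF =>
      cases hT with
      | lCSC => exact .inl ⟨_, _, _, rfl⟩
      | lCSC' => exact .inl ⟨_, _, _, rfl⟩
      | sbPair =>
          rename_i b₂ e₂
          cases hF with
          | cons hT2 hF2 =>
              cases hT2 with
              | rUSB =>
                  rename_i c₂ f₂ hD
                  rcases S1R hF2 f₂ with ⟨ab, de, ws', rfl⟩ | ⟨t, rfl, hnew⟩
                  · exact .inr (.inl ⟨[_], ws', _, _, ab, de, rfl⟩)
                  · have hnew2 := Frag.cons (TStep.pure (D := D) (some c) (some e₂))
                      (Frag.cons (TStep.rCSB b₂ c₂ e₂ f₂) hnew)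
                    exact .inr (.inr ⟨b₂, c₂, e₂, f₂, t, _, hD, by omega, rfl,
                      frag_eq hnew2 rfl (by omega) rfl⟩)

theorem S3 {ah b₂ d e ws out r s} (h : Frag D (.sb2 ah b₂ d e) ws out r s (.nm none)) :
    BadU ws ∨ ∃ c₂ f₂ t s₂, ((ah,b₂,c₂),(d,e,f₂)) ∈ D ∧ s = s₂ + 2 ∧
      out = some b₂ :: some c₂ :: t ∧
      Frag D (.nm (some e)) ws (some e :: some f₂ :: t) (r + 1) s₂ (.nm none) := by
  cases h with
  | cons hT hF =>
      cases hT with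
      | rUSB =>
          rename_i c₂ f₂ hD
          rcases S1R hF f₂ with ⟨ab, de, ws', rfl⟩ | ⟨t, rfl, hnew⟩
          · exact .inl ⟨[], ws', _, _, ab, de, rfl⟩
          · have hnew2 := Frag.cons (TStep.rCSB (D := D) b₂ c₂ e f₂) hnew
            exact .inr ⟨c₂, f₂, t, _, hD, by omega, rfl,
              frag_eq hnew2 rfl (by omega) rfl⟩


theorem frag_eqw {st ws ws' out out' r r' s s' fin} (h : Frag D st ws out r s fin)
    (hw : ws = ws') (ho : out = out') (hr : r = r') (hs : s = s') :
    Frag D st ws' out' r' s' fin := by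
  subst hw; subst ho; subst hr; subst hs; exact h

theorem ostep_mk {a b c d e f : α} {P S o o'} (hD : ((a,b,c),(d,e,f)) ∈ D)
    (ho : o = P ++ [some a, some b, some c] ++ S)
    (ho' : o' = P ++ [some d, some e, some f] ++ S) : OStep3 D o o' :=
  ⟨a, b, c, d, e, f, hD, P, S, ho, ho'⟩

theorem chain1 {β : Type*} {R : β → β → Prop} {o o'} (h : R o o') : StepChain R o o' 1 :=
  .tail (.refl o) h

theorem chain2 {β : Type*} {R : β → β → Prop} {o o₁ o'} (h1 : R o o₁) (h2 : R o₁ o') :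
    StepChain R o o' 2 :=
  .tail (.tail (.refl o) h1) h2

theorem frag_mid {p sfx : List (WSym α)} {w1 w2 out r s}
    (h : Frag D (.nm none) (p ++ [w1, w2] ++ sfx) out r s (.nm none)) :
    ∃ stA stB stC outp o1 o2 outs rp r1 r2 rs sp s1 s2 ss,
      Frag D (.nm none) p outp rp sp stA ∧
      TStep D stA w1 o1 r1 s1 stB ∧ TStep D stB w2 o2 r2 s2 stC ∧
      Frag D stC sfx outs rs ss (.nm none) ∧
      out = outp ++ [o1, o2] ++ outs ∧ r = rp + r1 + r2 + rs ∧ s = sp + s1 + s2 + ss := by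
  have h' : Frag D (.nm none) (p ++ ([w1, w2] ++ sfx)) out r s (.nm none) := by
    simpa using h
  obtain ⟨stA, outp, out2, rp, sp, r2, s2, hP, hM, rfl, rfl, rfl⟩ := frag_split h'
  obtain ⟨stC, outm, outs, rm, sm, rs, ss, hM2, hS, rfl, rfl, rfl⟩ :=
    frag_split (ws1 := [w1, w2]) hM
  cases hM2 with
  | cons hT1 hM3 =>
      cases hM3 with
      | cons hT2 hM4 =>
          cases hM4
          exact ⟨_, _, _, _, _, _, _, _, _, _, _, _, _, _, _, hP, hT1, hT2, hS,
            by simp, by omega, by omega⟩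

theorem frag_assemble {p sfx : List (WSym α)} {w1 w2 stA stB stC outp o1 o2 outs rp r1 r2 rs sp s1 s2 ss}
    (hP : Frag D (.nm none) p outp rp sp stA)
    (h1 : TStep D stA w1 o1 r1 s1 stB) (h2 : TStep D stB w2 o2 r2 s2 stC)
    (hS : Frag D stC sfx outs rs ss (.nm none)) :
    Frag D (.nm none) (p ++ [w1, w2] ++ sfx) (outp ++ [o1, o2] ++ outs)
      (rp + r1 + r2 + rs) (sp + s1 + s2 + ss) (.nm none) := by
  have := frag_append hP (Frag.cons h1 (Frag.cons h2 hS))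
  exact frag_eqw this (by simp) (by simp) (by omega) (by omega)


/-- Target of the preservation lemma. -/
def Pres (D : Set ((α × α × α) × (α × α × α))) (out : List (Option α)) (r s : ℕ)
    (u2 : List (WSym α)) : Prop :=
  BadU u2 ∨ ∃ out' r' s' k, Frag D (.nm none) u2 out' r' s' (.nm none) ∧
    StepChain (OStep3 D) out out' k ∧ s + 1 + r' = r + 3 * k + s'

theorem pair_src {stA x z o1 r1 s1 stB} (h : TStep D stA (.pair x z) o1 r1 s1 stB)
    (hsh : stB = .nm z ∨ ∃ z' ch, z = some z' ∧ stB = .mmB z' ch) :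
    r1 = 0 ∧ s1 = 0 ∧ (∀ z2, TStep D stA (.pair x z2) o1 0 0 (.nm z2)) ∧
      (∀ z2 ch, TStep D stA (.pair x (some z2)) o1 0 0 (.mmB z2 ch)) := by
  cases h with
  | pure => exact ⟨rfl, rfl, fun z2 => .pure x z2, fun z2 ch => .toB x z2 ch⟩
  | toB => exact ⟨rfl, rfl, fun z2 => .pure x z2, fun z2 ch => .toB x z2 ch⟩
  | fromF =>
      rename_i c0 f0
      exact ⟨rfl, rfl, fun z2 => .fromF c0 f0 z2, fun z2 ch => .fromF_toB c0 f0 z2 ch⟩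
  | fromF_toB =>
      rename_i c0 f0 d0 a0
      exact ⟨rfl, rfl, fun z2 => .fromF c0 f0 z2, fun z2 ch => .fromF_toB c0 f0 z2 ch⟩
  | scDisp => rcases hsh with h | ⟨z', ch, _, h⟩ <;> cases h
  | sbPair => rcases hsh with h | ⟨z', ch, _, h⟩ <;> cases h

theorem preserveB {u u2 : List (WSym α)} {out r s} {a b d e : α} {x : Option α}
    (hG : Frag D (.nm none) u out r s (.nm none))
    (hs2 : Sub2 (WSym.pair x (some a)) (WSym.left (a, b) (d, e))
      (WSym.pair x (some d)) (WSym.pair (some d) (some e)) u u2) :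
    Pres D out r s u2 := by
  obtain ⟨p, sfx, rfl, rfl⟩ := hs2
  obtain ⟨stA, stB, stC, outp, o1, o2, outs, rp, r1, r2, rs, sp, s1, s2, ss,
    hP, hT1, hT2, hS, rfl, rfl, rfl⟩ := frag_mid hG
  cases hT2 with
  | lS0 =>
      -- uncommitted op with its S⁻ : apply B; the op had either S⁺ next (S0 → SB)
      -- or its displayed tail (SC completing → commit)
      obtain ⟨rfl, rfl, h1n, h1b⟩ := pair_src hT1 (.inl rfl)
      cases hS with
      | cons hT3 hS2 =>
          rename_i w3 o3 ra sa st3 sfx2 outs2 rs2 ss2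
          cases hT3 with
          | rS0 =>
              rename_i c₃ f₃ hD₃
              have hF' := frag_append hP (Frag.cons (h1b d a)
                (Frag.cons (TStep.sbPair (D := D) a b d e)
                  (Frag.cons (TStep.rUSB a b c₃ d e f₃ hD₃) hS2)))
              exact .inr ⟨outp ++ [o1, some a] ++ (some b :: outs2),
                rp + 0 + 0 + (0 + rs2), sp + 0 + 0 + (2 + ss2), 0,
                frag_eqw hF' (by simp) (by simp) (by omega) (by omega), .refl _, by omega⟩
          | scDisp =>
              rename_i c₃ f₃ hD₃
              obtain ⟨t, rfl, hS3⟩ := S1F hS2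
              have hF' := frag_append hP (Frag.cons (h1n (some d))
                (Frag.cons (TStep.pure (D := D) (some d) (some e))
                  (Frag.cons (TStep.pure (D := D) (some e) (some f₃)) hS3)))
              refine .inr ⟨outp ++ [o1, some d] ++ (some e :: some f₃ :: t),
                rp + 0 + 0 + (0 + rs2), sp + 0 + 0 + (0 + ss2), 1,
                frag_eqw hF' (by simp) (by simp) (by omega) (by omega),
                chain1 (ostep_mk (P := outp ++ [o1]) (S := t) hD₃ (by simp) (by simp)),
                by omega⟩
  | lCSC =>
      obtain ⟨rfl, rfl, h1n, h1b⟩ := pair_src hT1 (.inr ⟨a, d, rfl, rfl⟩)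
      have hF' := frag_assemble hP (h1n (some d)) (TStep.pure (D := D) (some d) (some e)) hS
      exact .inr ⟨_, _, _, 0, hF', .refl _, by omega⟩
  | lCSC' =>
      rename_i ch
      obtain ⟨rfl, rfl, h1n, h1b⟩ := pair_src hT1 (.inr ⟨a, d, rfl, rfl⟩)
      have hF' := frag_assemble hP (h1n (some d)) (TStep.toB (D := D) (some d) e ch) hS
      exact .inr ⟨_, _, _, 0, hF', .refl _, by omega⟩

theorem preserveC {u u2 : List (WSym α)} {out r s} {b c e f : α} {y : Option α}
    (hG : Frag D (.nm none) u out r s (.nm none))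
    (hs2 : Sub2 (WSym.right (b, c) (e, f)) (WSym.pair (some c) y)
      (WSym.pair (some e) (some f)) (WSym.pair (some f) y) u u2) :
    Pres D out r s u2 := by
  obtain ⟨p, sfx, rfl, rfl⟩ := hs2
  obtain ⟨stA, stB, stC, outp, o1, o2, outs, rp, r1, r2, rs, sp, s1, s2, ss,
    hP, hT1, hT2, hS, rfl, rfl, rfl⟩ := frag_mid hG
  cases hT1 with
  | rS0 =>
      rename_i a₁ d₁ hD₁
      cases hT2 with
      | pure =>
          have hF' := frag_assemble hP (TStep.scDisp a₁ b c d₁ e f hD₁)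
            (TStep.fromF (D := D) f c y) hS
          exact .inr ⟨_, _, _, 0, hF', .refl _, by omega⟩
      | toB =>
          rename_i d₂ ch
          have hF' := frag_assemble hP (TStep.scDisp a₁ b c d₁ e f hD₁)
            (TStep.fromF_toB (D := D) f c d₂ ch) hS
          exact .inr ⟨_, _, _, 0, hF', .refl _, by omega⟩
  | rUSB =>
      rename_i a₁ d₁ hD₁
      obtain ⟨t, g, rfl, hP'⟩ := P1 hP
      cases hT2 with
      | pure =>
          have hF' := frag_assemble hP' (TStep.pure (D := D) (some e) (some f))
            (TStep.pure (D := D) (some f) y) hS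
          refine .inr ⟨_, _, _, 1, hF',
            chain1 (ostep_mk (P := t ++ [g]) (S := outs) hD₁ (by simp) (by simp)),
            by omega⟩
      | toB =>
          rename_i d₂ ch
          have hF' := frag_assemble hP' (TStep.pure (D := D) (some e) (some f))
            (TStep.toB (D := D) (some f) d₂ ch) hS
          refine .inr ⟨_, _, _, 1, hF',
            chain1 (ostep_mk (P := t ++ [g]) (S := outs) hD₁ (by simp) (by simp)),
            by omega⟩
  | rCSB =>
      cases hT2 with
      | fromF =>
          have hF' := frag_assemble hP (TStep.pure (D := D) (some e) (some f))
            (TStep.pure (D := D) (some f) y) hS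
          exact .inr ⟨_, _, _, 0, hF', .refl _, by omega⟩
      | fromF_toB =>
          rename_i d₂ ch
          have hF' := frag_assemble hP (TStep.pure (D := D) (some e) (some f))
            (TStep.toB (D := D) (some f) d₂ ch) hS
          exact .inr ⟨_, _, _, 0, hF', .refl _, by omega⟩
  | rCSB' =>
      rename_i g
      cases hT2 with
      | fromF =>
          have hF' := frag_assemble hP (TStep.fromF (D := D) e g (some f))
            (TStep.pure (D := D) (some f) y) hS
          exact .inr ⟨_, _, _, 0, hF', .refl _, by omega⟩
      | fromF_toB =>
          rename_i d₂ ch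
          have hF' := frag_assemble hP (TStep.fromF (D := D) e g (some f))
            (TStep.toB (D := D) (some f) d₂ ch) hS
          exact .inr ⟨_, _, _, 0, hF', .refl _, by omega⟩


theorem badU_append_left {q : List (WSym α)} (p : List (WSym α)) (h : BadU q) :
    BadU (p ++ q) := by
  obtain ⟨p₀, q₀, x1, x2, y1, y2, rfl⟩ := h
  exact ⟨p ++ p₀, q₀, x1, x2, y1, y2, by simp⟩

theorem badU_append_right {p : List (WSym α)} (q : List (WSym α)) (h : BadU p) :
    BadU (p ++ q) := by
  obtain ⟨p₀, q₀, x1, x2, y1, y2, rfl⟩ := h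
  exact ⟨p₀, q₀ ++ q, x1, x2, y1, y2, by simp⟩

theorem preserveA {u u2 : List (WSym α)} {out r s} {a b c d e f : α}
    (hG : Frag D (.nm none) u out r s (.nm none)) (hD : ((a,b,c),(d,e,f)) ∈ D)
    (hs2 : Sub2 (WSym.pair (some a) (some b)) (WSym.pair (some b) (some c))
      (WSym.left (a,b) (d,e)) (WSym.right (b,c) (e,f)) u u2) :
    Pres D out r s u2 := by
  obtain ⟨p, sfx, rfl, rfl⟩ := hs2
  obtain ⟨stA, stB, stC, outp, o1, o2, outs, rp, r1, r2, rs, sp, s1, s2, ss,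
    hP, hT1, hT2, hS, rfl, rfl, rfl⟩ := frag_mid hG
  cases hT1 with
  | pure =>
      cases hT2 with
      | pure =>
          exact .inr ⟨_, _, _, 0,
            frag_assemble hP (TStep.lS0 (D := D) a b d e) (TStep.rS0 a b c d e f hD) hS,
            .refl _, by omega⟩
      | toB =>
          rename_i ch
          rcases S2 hS with ⟨ab2, de2, ws', rfl⟩ | hbad |
            ⟨b₂, c₂, e₂, f₂, t, s₂, hD₂, hss, rfl, hF₂⟩
          · exact .inl ⟨p ++ [WSym.left (a,b) (d,e)], ws', (b,c), (e,f), ab2, de2, by simp⟩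
          · exact .inl (badU_append_left _ hbad)
          · have hF' := frag_assemble hP (TStep.lS0 (D := D) a b d e)
              (TStep.rS0 a b c d e f hD) hF₂
            exact .inr ⟨_, _, _, 1, hF',
              chain1 (ostep_mk (P := outp ++ [some a, some b]) (S := t) hD₂
                (by simp) (by simp)), by omega⟩
  | toB =>
      rename_i bh
      cases hT2 with
      | sbPair =>
          rename_i b2h
          rcases S3 hS with hbad | ⟨c₂, f₂, t, s₂, hD₂, hss, rfl, hF₂⟩
          · exact .inl (badU_append_left _ hbad)
          · have hF' := frag_assemble hP (TStep.lS0 (D := D) a b d e)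
              (TStep.rS0 a b c d e f hD) hF₂
            exact .inr ⟨_, _, _, 1, hF',
              chain1 (ostep_mk (P := outp ++ [some a]) (S := t) hD₂
                (by simp) (by simp)), by omega⟩
  | fromF =>
      rename_i f0
      rcases P2 hP with hbad | ⟨a₁, b₁, d₁, e₁, t, s₂, hD₁, hsp, rfl, hP'⟩
      · rcases hbad with hbadp | ⟨p₀, x1, x2, rfl⟩
        · exact .inl (badU_append_right _ (badU_append_right _ hbadp))
        · exact .inl ⟨p₀, [WSym.right (b,c) (e,f)] ++ sfx, x1, x2, (a,b), (d,e), by simp⟩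
      · cases hT2 with
        | pure =>
            have hF' := frag_assemble hP' (TStep.lS0 (D := D) a b d e)
              (TStep.rS0 a b c d e f hD) hS
            exact .inr ⟨_, _, _, 1, hF',
              chain1 (ostep_mk (P := t) (S := [some b] ++ outs) hD₁
                (by simp) (by simp)), by omega⟩
        | toB =>
            rename_i ch
            rcases S2 hS with ⟨ab2, de2, ws', rfl⟩ | hbad2 |
              ⟨b₂, c₂, e₂, f₂, t₂, s₃, hD₂, hss, rfl, hF₂⟩
            · exact .inl ⟨p ++ [WSym.left (a,b) (d,e)], ws', (b,c), (e,f), ab2, de2, by simp⟩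
            · exact .inl (badU_append_left _ hbad2)
            · have hF' := frag_assemble hP' (TStep.lS0 (D := D) a b d e)
                (TStep.rS0 a b c d e f hD) hF₂
              exact .inr ⟨_, _, _, 2, hF',
                chain2 (o₁ := t ++ [some d₁, some e₁, some a, some b] ++
                    (some ch :: some b₂ :: some c₂ :: t₂))
                  (ostep_mk (P := t)
                    (S := [some b] ++ (some ch :: some b₂ :: some c₂ :: t₂)) hD₁
                    (by simp) (by simp))
                  (ostep_mk (P := t ++ [some d₁, some e₁, some a, some b]) (S := t₂) hD₂
                    (by simp) (by simp)), by omega⟩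
  | fromF_toB =>
      rename_i f0 bh
      rcases P2 hP with hbad | ⟨a₁, b₁, d₁, e₁, t, s₂, hD₁, hsp, rfl, hP'⟩
      · rcases hbad with hbadp | ⟨p₀, x1, x2, rfl⟩
        · exact .inl (badU_append_right _ (badU_append_right _ hbadp))
        · exact .inl ⟨p₀, [WSym.right (b,c) (e,f)] ++ sfx, x1, x2, (a,b), (d,e), by simp⟩
      · cases hT2 with
        | sbPair =>
            rename_i b2h
            rcases S3 hS with hbad2 | ⟨c₂, f₂, t₂, s₃, hD₂, hss, rfl, hF₂⟩
            · exact .inl (badU_append_left _ hbad2)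
            · have hF' := frag_assemble hP' (TStep.lS0 (D := D) a b d e)
                (TStep.rS0 a b c d e f hD) hF₂
              exact .inr ⟨_, _, _, 2, hF',
                chain2 (o₁ := t ++ [some d₁, some e₁, some a, some bh] ++
                    (some b2h :: some c₂ :: t₂))
                  (ostep_mk (P := t)
                    (S := [some bh] ++ (some b2h :: some c₂ :: t₂)) hD₁
                    (by simp) (by simp))
                  (ostep_mk (P := t ++ [some d₁, some e₁, some a]) (S := t₂) hD₂
                    (by simp) (by simp)), by omega⟩
  | scDisp =>
      rename_i a₁ b₁ c₁ d₁ hD₁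
      rcases P3 hP with hbadp | ⟨t, rfl, hP'⟩
      · exact .inl (badU_append_right _ (badU_append_right _ hbadp))
      · cases hT2 with
        | fromF =>
            have hF' := frag_assemble hP' (TStep.lS0 (D := D) a b d e)
              (TStep.rS0 a b c d e f hD) hS
            exact .inr ⟨_, _, _, 1, hF',
              chain1 (ostep_mk (P := t) (S := outs) hD₁ (by simp) (by simp)), by omega⟩
        | fromF_toB =>
            rename_i ch
            rcases S2 hS with ⟨ab2, de2, ws', rfl⟩ | hbad2 |
              ⟨b₂, c₂, e₂, f₂, t₂, s₃, hD₂, hss, rfl, hF₂⟩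
            · exact .inl ⟨p ++ [WSym.left (a,b) (d,e)], ws', (b,c), (e,f), ab2, de2, by simp⟩
            · exact .inl (badU_append_left _ hbad2)
            · have hF' := frag_assemble hP' (TStep.lS0 (D := D) a b d e)
                (TStep.rS0 a b c d e f hD) hF₂
              exact .inr ⟨_, _, _, 2, hF',
                chain2 (o₁ := t ++ [some d₁, some a, some b] ++
                    (some ch :: some b₂ :: some c₂ :: t₂))
                  (ostep_mk (P := t)
                    (S := some ch :: some b₂ :: some c₂ :: t₂) hD₁
                    (by simp) (by simp))
                  (ostep_mk (P := t ++ [some d₁, some a, some b]) (S := t₂) hD₂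
                    (by simp) (by simp)), by omega⟩
  | sbPair =>
      rename_i ah bh
      cases hT2

theorem preserve {u u2 : List (WSym α)} {out r s}
    (hG : Frag D (.nm none) u out r s (.nm none)) (h : Step2 D u u2) :
    BadU u2 ∨ ∃ out' r' s' k, Frag D (.nm none) u2 out' r' s' (.nm none) ∧
      StepChain (OStep3 D) out out' k ∧ s + 1 + r' = r + 3 * k + s' := by
  obtain ⟨a, b, c, d, e, f, hD, hA | ⟨x, hB⟩ | ⟨y, hC⟩⟩ := h
  · exact preserveA hG hD hA
  · exact preserveB hG hB
  · exact preserveC hG hC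

theorem invariant_strong {v : List α} {u n}
    (h : StepChain (Step2 D) (encS v) u n) :
    BadU u ∨ ∃ v' r s m, Frag D (.nm none) u (none :: v'.map some) r s (.nm none) ∧
      StepChain (Step3 D) v v' m ∧ n + r = 3 * m + s := by
  induction h with
  | refl =>
      right
      exact ⟨v, 0, 0, 0, by rw [encS_eq_wnd]; exact frag_wnd (v.map some) none,
        .refl v, rfl⟩
  | tail hc hs ih =>
      rcases ih with hb | ⟨v', r, s, m, hF, hch, heq⟩
      · exact .inl (bad_step hb hs)
      · rcases preserve hF hs with hb | ⟨out', r', s', k, hF', hoc, heq2⟩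
        · exact .inl hb
        · obtain ⟨v'', rfl, hch2⟩ := ochain_lift hoc
          exact .inr ⟨v'', r', s', m + k, hF', stepChain_append hch hch2, by omega⟩

end HamRed

/-- Invariant lemma: any string over the augmented alphabet reachable from an
encoding `E(v)` by the cost-1 `2`-substitutions of the reduction and containing no
marker symbol is itself the encoding `E(v')` of some `v'`, and `v'` is reachable
from `v` by allowed `3`-substitutions whose number is one third of the number of
`2`-substitutions applied. -/
theorem invariant_lemma {α : Type*} (D : Set ((α × α × α) × (α × α × α)))
    (v : List α) (u : List (WSym α)) (n : ℕ)
    (hchain : StepChain (Step2 D) (encS v) u n)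
    (hnomarker : ∀ z ∈ u, ∃ x y : Option α, z = WSym.pair x y) :
    ∃ (v' : List α) (m : ℕ), u = encS v' ∧ n = 3 * m ∧ StepChain (Step3 D) v v' m := by
  rcases HamRed.invariant_strong hchain with hb | ⟨v', r, s, m, hF, hch, heq⟩
  · obtain ⟨p, q, x1, x2, y1, y2, rfl⟩ := hb
    obtain ⟨x, y, hxy⟩ := hnomarker (WSym.right x1 x2) (by simp)
    cases hxy
  · have hfp := (HamRed.frag_pairs hF rfl hnomarker).1 none rfl
    obtain ⟨rfl, rfl, hbr⟩ := hfp
    rcases hbr with ⟨-, hout, -⟩ | ⟨t, hout, rfl⟩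
    · cases hout
    · obtain rfl : t = v'.map some := by simpa using hout.symm
      exact ⟨v', m, (HamRed.encS_eq_wnd v').symm, by omega, hch⟩
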